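/- Let M and V be finite signed measures on ℤ such that the Wasserstein norm ‖M‖_W = Σ_{k∈ℤ}|M((−∞,k])| is finite. Then ‖M*V‖_W ≤ ‖M‖_W · ‖V‖_TV. -/

import Mathlib

open scoped BigOperators

noncomputable section

/-- A (signed) measure on ℤ, represented by its point masses. -/
abbrev SM := ℤ → ℝ

/-- Point mass at `a ∈ ℤ`. -/
def dirac (a : ℤ) : SM := fun k => if k = a then 1 else 0

/-- Convolution of two measures on ℤ. -/
def conv (M V : SM) : SM := fun m => ∑' k : ℤ, M (m - k) * V k

/-- Convolution powers, `convPow M 0 = I` (point mass at 0). -/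
def convPow (M : SM) : ℕ → SM
  | 0 => dirac 0
  | n + 1 => conv (convPow M n) M

/-- Exponential of a measure: `exp M = ∑_{j≥0} M^{*j}/j!`. -/
def expSM (M : SM) : SM := fun k => ∑' j : ℕ, convPow M j k / (Nat.factorial j : ℝ)

/-- Total variation norm `‖M‖_TV = ∑_k |M{k}|`. -/
def tvNorm (M : SM) : ℝ := ∑' k : ℤ, |M k|

/-- Local (point) norm `‖M‖_∞ = sup_k |M{k}|`. -/
def locNorm (M : SM) : ℝ := ⨆ k : ℤ, |M k|

/-- `M((-∞,k])`. -/
def cdf (M : SM) (k : ℤ) : ℝ := ∑' j : ℤ, if j ≤ k then M j else 0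

/-- Wasserstein norm `‖M‖_W = ∑_k |M((-∞,k])|`. -/
def wNorm (M : SM) : ℝ := ∑' k : ℤ, |cdf M k|

/-- ℓ_r norm. -/
def lrNorm (r : ℝ) (M : SM) : ℝ := (∑' k : ℤ, |M k| ^ r) ^ (1 / r)

/-- L_r norm. -/
def LrNorm (r : ℝ) (M : SM) : ℝ := (∑' k : ℤ, |cdf M k| ^ r) ^ (1 / r)

/-- Transition probabilities of the three-state Markov chain: states `0,1,2`
correspond to `a₁,a₂,a₃`; from `a₁` or `a₃` the probabilities are `(α, 1-2α, α)`,
from `a₂` they are `(β, 1-2β, β)`. -/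
def transP (a b : ℝ) (i j : Fin 3) : ℝ :=
  if i = 1 then (if j = 1 then 1 - 2 * b else b) else (if j = 1 then 1 - 2 * a else a)

/-- Joint distribution of `(Sₙ, ξₙ)`, with `f(a₁)=-1, f(a₂)=0, f(a₃)=1`,
`Sₙ = f(ξ₁)+⋯+f(ξₙ)` and initial distribution `p`. -/
def jointDist (a b : ℝ) (p : Fin 3 → ℝ) : ℕ → ℤ → Fin 3 → ℝ
  | 0 => fun k i => if k = 0 then p i else 0
  | n + 1 => fun k j =>
      ∑ i : Fin 3, jointDist a b p n (k - ((j : ℤ) - 1)) i * transP a b i j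

/-- `Fₙ`, the distribution of `Sₙ`. -/
def F (a b : ℝ) (p : Fin 3 → ℝ) (n : ℕ) : SM := fun k => ∑ j : Fin 3, jointDist a b p n k j

/-- The symmetric Skellam distribution `D = exp{λ(I₁-I) + λ(I₋₁-I)}`,
`λ = β/(1-2α+2β)`. -/
def skellam (a b : ℝ) : SM :=
  expSM ((b / (1 - 2 * a + 2 * b)) • (dirac 1 - dirac 0)
    + (b / (1 - 2 * a + 2 * b)) • (dirac (-1) - dirac 0))

/-- `L = (I₋₁ + I₁)/2`. -/
def Lm : SM := (2 : ℝ)⁻¹ • (dirac (-1) + dirac 1)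

/-- `U = L - I`. -/
def Um : SM := Lm - dirac 0

/-- The measure `A₁` of the first-order asymptotic expansion. -/
def A1 (a b p2 : ℝ) : SM :=
  (2 * (a - b) / (1 - 2 * a + 2 * b) * ((1 - 2 * a) / (1 - 2 * a + 2 * b) - p2)) • Um

/-- The measure `A₂` of the first-order asymptotic expansion. -/
def A2 (a b : ℝ) : SM :=
  (2 * b / (1 - 2 * a + 2 * b) ^ 2 *
    (2 * (a - b) * (1 - 2 * a) / (1 - 2 * a + 2 * b) - b)) • convPow Um 2

/-- The compound geometric law `H = (1-2α) Σ_j (2α)^j L^{*(j+1)}`. -/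
def Hm (a : ℝ) : SM := fun k => ∑' j : ℕ, (1 - 2 * a) * (2 * a) ^ j * convPow Lm (j + 1) k

/-- `G = exp{(2β(1-2α)/(1-2α+2β))(H - I)}`. -/
def Gm (a b : ℝ) : SM := expSM ((2 * b * (1 - 2 * a) / (1 - 2 * a + 2 * b)) • (Hm a - dirac 0))

/-- Shear equivalence on ℤ × ℤ. -/
def shearE : ℤ × ℤ ≃ ℤ × ℤ where
  toFun p := (p.1 - p.2, p.2)
  invFun p := (p.1 + p.2, p.2)
  left_inv p := by simp
  right_inv p := by simp

lemma shear_summable {f g : ℤ → ℝ} (hf : Summable f) (hg : Summable g)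
    (hf0 : ∀ k, 0 ≤ f k) (hg0 : ∀ k, 0 ≤ g k) :
    Summable (fun p : ℤ × ℤ => f (p.1 - p.2) * g p.2) := by
  have h := hf.mul_of_nonneg hg hf0 hg0
  have h2 := h.comp_injective shearE.injective
  simpa [Function.comp_def, shearE] using h2

lemma translate_tsum (f : ℤ → ℝ) (i : ℤ) : ∑' j : ℤ, f (j - i) = ∑' j : ℤ, f j := by
  exact (Equiv.subRight i).tsum_eq f

lemma cdf_shift (M : SM) (k i : ℤ) :
    ∑' j : ℤ, (if j ≤ k then M (j - i) else 0) = cdf M (k - i) := by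
  rw [cdf, ← (Equiv.addRight i).tsum_eq]
  congr 1; funext j
  simp only [Equiv.coe_addRight, add_sub_cancel_right]
  congr 1
  simp [le_sub_iff_add_le]

theorem wNorm_conv_le :
    ∀ M V : SM, Summable (fun k => |M k|) → Summable (fun k => |V k|) →
      Summable (fun k => |cdf M k|) →
      wNorm (conv M V) ≤ wNorm M * tvNorm V := by
  intro M V hM hV hW
  -- the dominating product family
  have Sdom : Summable (fun p : ℤ × ℤ => |M (p.1 - p.2)| * |V p.2|) :=
    shear_summable (f := fun x => |M x|) (g := fun x => |V x|) hM hV (fun _ => abs_nonneg _) (fun _ => abs_nonneg _)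
  have SW : Summable (fun p : ℤ × ℤ => |cdf M (p.1 - p.2)| * |V p.2|) :=
    shear_summable (f := fun x => |cdf M x|) (g := fun x => |V x|) hW hV (fun _ => abs_nonneg _) (fun _ => abs_nonneg _)
  -- key formula for cdf of convolution
  have key : ∀ k : ℤ, cdf (conv M V) k = ∑' i : ℤ, cdf M (k - i) * V i := by
    intro k
    have hsum : Summable (fun p : ℤ × ℤ => if p.1 ≤ k then M (p.1 - p.2) * V p.2 else 0) := by
      apply Summable.of_norm_bounded Sdom
      intro p
      rw [Real.norm_eq_abs]
      split
      · exact le_of_eq (abs_mul _ _)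
      · rw [abs_zero]
        positivity
    have h1 : cdf (conv M V) k
        = ∑' j : ℤ, ∑' i : ℤ, (if j ≤ k then M (j - i) * V i else 0) := by
      rw [cdf]
      congr 1; funext j
      split
      · rfl
      · simp
    rw [h1]
    have h2 := Summable.tsum_comm (f := fun i j => if j ≤ k then M (j - i) * V i else 0)
      (by
        apply hsum.comp_injective (Equiv.prodComm ℤ ℤ).injective)
    -- h2 : ∑' j i, ... = ∑' i j, ...
    rw [h2]
    congr 1; funext i
    have : ∀ j : ℤ, (if j ≤ k then M (j - i) * V i else 0)
        = (if j ≤ k then M (j - i) else 0) * V i := by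
      intro j; split <;> simp
    simp_rw [this]
    rw [tsum_mul_right, cdf_shift]
  -- pointwise bound
  have bound : ∀ k : ℤ, |cdf (conv M V) k| ≤ ∑' i : ℤ, |cdf M (k - i)| * |V i| := by
    intro k
    rw [key k]
    have hs : Summable (fun i : ℤ => |cdf M (k - i)| * |V i|) := SW.prod_factor k
    have h3 := norm_tsum_le_tsum_norm (f := fun i : ℤ => cdf M (k - i) * V i)
      (by simpa [abs_mul] using hs)
    simpa [abs_mul] using h3
  -- summability of the bound in k
  have hBsum : Summable (fun k : ℤ => ∑' i : ℤ, |cdf M (k - i)| * |V i|) := SW.prod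
  have hLsum : Summable (fun k : ℤ => |cdf (conv M V) k|) :=
    Summable.of_nonneg_of_le (fun k => abs_nonneg _) bound hBsum
  calc wNorm (conv M V) = ∑' k : ℤ, |cdf (conv M V) k| := rfl
    _ ≤ ∑' k : ℤ, ∑' i : ℤ, |cdf M (k - i)| * |V i| := Summable.tsum_le_tsum bound hLsum hBsum
    _ = ∑' i : ℤ, ∑' k : ℤ, |cdf M (k - i)| * |V i| := by
        exact (Summable.tsum_comm (f := fun k i => |cdf M (k - i)| * |V i|) SW).symm
    _ = ∑' i : ℤ, (∑' k : ℤ, |cdf M (k - i)|) * |V i| := by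
        congr 1; funext i; rw [tsum_mul_right]
    _ = ∑' i : ℤ, wNorm M * |V i| := by
        congr 1; funext i
        rw [translate_tsum (fun j => |cdf M j|) i]; rfl
    _ = wNorm M * tvNorm V := by rw [tsum_mul_left]; rfl
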